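/- (Sample complexity bound, scalar version of Calafiore–Campi.) Let g: Ξ → ℝ be measurable on a probability space (Ξ, P), let ξ̂₁, …, ξ̂_S be i.i.d. samples from P, and let t* = max_{s ≤ S} g(ξ̂_s). If S ≥ 1/(pv) − 1 for p, v ∈ (0,1), then with probability at least 1 − v over the samples, P(g(ξ) > t*) ≤ p. -/

import Mathlib

open MeasureTheory Filter

private lemma cc_quantile {Ξ : Type*} [MeasurableSpace Ξ] (P : Measure Ξ)
    [IsProbabilityMeasure P] (g : Ξ → ℝ) (hg : Measurable g)
    (p : ℝ) (hp : p ∈ Set.Ioo (0:ℝ) 1) :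
    ∃ tp : ℝ, P {x | tp < g x} ≤ ENNReal.ofReal p ∧
      ENNReal.ofReal p ≤ P {x | tp ≤ g x} := by
  obtain ⟨hp0, hp1⟩ := hp
  set F : ℝ → ENNReal := fun t => P {x | t < g x} with hF
  have hFmeas : ∀ t : ℝ, MeasurableSet {x | t < g x} := fun t => hg measurableSet_Ioi
  have hFanti : Antitone F := fun a b hab =>
    measure_mono (fun x hx => lt_of_le_of_lt hab hx)
  set A : Set ℝ := {t | F t ≤ ENNReal.ofReal p} with hA
  have hAup : ∀ a ∈ A, ∀ b, a ≤ b → b ∈ A := fun a ha b hab =>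
    le_trans (hFanti hab) ha
  -- A is nonempty
  have hAne : A.Nonempty := by
    have hinter : (⋂ n : ℕ, {x | (n : ℝ) < g x}) = ∅ := by
      ext x
      simp only [Set.mem_iInter, Set.mem_setOf_eq, Set.mem_empty_iff_false, iff_false,
        not_forall, not_lt]
      obtain ⟨n, hn⟩ := exists_nat_ge (g x)
      exact ⟨n, hn⟩
    have hanti : Antitone (fun n : ℕ => {x | (n : ℝ) < g x}) := by
      intro a b hab x hx
      simp only [Set.mem_setOf_eq] at hx ⊢
      exact lt_of_le_of_lt (by exact_mod_cast hab) hx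
    have htend : Tendsto (fun n : ℕ => F (n : ℝ)) atTop (nhds 0) := by
      have h := MeasureTheory.tendsto_measure_iInter_atTop (μ := P)
        (s := fun n : ℕ => {x | (n : ℝ) < g x})
        (fun n => (hFmeas _).nullMeasurableSet) hanti ⟨0, measure_ne_top _ _⟩
      rwa [hinter, measure_empty] at h
    have hev := htend.eventually (gt_mem_nhds (ENNReal.ofReal_pos.mpr hp0))
    obtain ⟨n, hn⟩ := hev.exists
    exact ⟨(n : ℝ), hn.le⟩
  -- A is bounded below
  have hAbdd : BddBelow A := by
    have hunion : (⋃ n : ℕ, {x | -(n : ℝ) < g x}) = Set.univ := by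
      ext x
      simp only [Set.mem_iUnion, Set.mem_setOf_eq, Set.mem_univ, iff_true]
      obtain ⟨n, hn⟩ := exists_nat_ge (-(g x))
      exact ⟨n + 1, by push_cast; linarith⟩
    have hmono : Monotone (fun n : ℕ => {x | -(n : ℝ) < g x}) := by
      intro a b hab x hx
      simp only [Set.mem_setOf_eq] at hx ⊢
      have : (a:ℝ) ≤ b := by exact_mod_cast hab
      linarith
    have htend : Tendsto (fun n : ℕ => F (-(n : ℝ))) atTop (nhds 1) := by
      have h := MeasureTheory.tendsto_measure_iUnion_atTop (μ := P)
        (s := fun n : ℕ => {x | -(n : ℝ) < g x}) hmono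
      rwa [hunion, measure_univ] at h
    have hev := htend.eventually (lt_mem_nhds (ENNReal.ofReal_lt_one.mpr hp1))
    obtain ⟨n, hn⟩ := hev.exists
    refine ⟨-(n : ℝ), fun a ha => ?_⟩
    by_contra hcon
    push_neg at hcon
    exact absurd (hAup a ha _ hcon.le) (not_le.mpr hn)
  set tp : ℝ := sInf A with htp
  refine ⟨tp, ?_, ?_⟩
  · -- F tp ≤ p  via union along tp + 1/(n+1)
    have hunion : (⋃ n : ℕ, {x | tp + 1/((n:ℝ)+1) < g x}) = {x | tp < g x} := by
      ext x
      simp only [Set.mem_iUnion, Set.mem_setOf_eq]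
      constructor
      · rintro ⟨n, hn⟩
        have : (0:ℝ) < 1/((n:ℝ)+1) := by positivity
        linarith
      · intro hx
        obtain ⟨n, hn⟩ := exists_nat_one_div_lt (show (0:ℝ) < g x - tp by linarith)
        exact ⟨n, by linarith⟩
    have hmono : Monotone (fun n : ℕ => {x | tp + 1/((n:ℝ)+1) < g x}) := by
      intro a b hab x hx
      simp only [Set.mem_setOf_eq] at hx ⊢
      refine lt_of_le_of_lt ?_ hx
      have : (1:ℝ)/((b:ℝ)+1) ≤ 1/((a:ℝ)+1) := by
        apply one_div_le_one_div_of_le (by positivity)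
        have : (a:ℝ) ≤ b := by exact_mod_cast hab
        linarith
      linarith
    have htend : Tendsto (fun n : ℕ => F (tp + 1/((n:ℝ)+1))) atTop (nhds (F tp)) := by
      have h := MeasureTheory.tendsto_measure_iUnion_atTop (μ := P)
        (s := fun n : ℕ => {x | tp + 1/((n:ℝ)+1) < g x}) hmono
      rwa [hunion] at h
    refine le_of_tendsto htend (Eventually.of_forall fun n => ?_)
    have hlt : tp < tp + 1/((n:ℝ)+1) := by
      have : (0:ℝ) < 1/((n:ℝ)+1) := by positivity
      linarith
    obtain ⟨a, haA, ha⟩ := exists_lt_of_csInf_lt hAne hlt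
    exact le_trans (hFanti ha.le) haA
  · -- p ≤ P {tp ≤ g}  via intersection along tp - 1/(n+1)
    have hinter : (⋂ n : ℕ, {x | tp - 1/((n:ℝ)+1) < g x}) = {x | tp ≤ g x} := by
      ext x
      simp only [Set.mem_iInter, Set.mem_setOf_eq]
      constructor
      · intro h
        by_contra hcon
        push_neg at hcon
        obtain ⟨n, hn⟩ := exists_nat_one_div_lt (show (0:ℝ) < tp - g x by linarith)
        exact absurd (h n) (by linarith)
      · intro h n
        have : (0:ℝ) < 1/((n:ℝ)+1) := by positivity
        linarith
    have hanti : Antitone (fun n : ℕ => {x | tp - 1/((n:ℝ)+1) < g x}) := by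
      intro a b hab x hx
      simp only [Set.mem_setOf_eq] at hx ⊢
      refine lt_of_le_of_lt ?_ hx
      have : (1:ℝ)/((b:ℝ)+1) ≤ 1/((a:ℝ)+1) := by
        apply one_div_le_one_div_of_le (by positivity)
        have : (a:ℝ) ≤ b := by exact_mod_cast hab
        linarith
      linarith
    have htend : Tendsto (fun n : ℕ => F (tp - 1/((n:ℝ)+1))) atTop
        (nhds (P {x | tp ≤ g x})) := by
      have h := MeasureTheory.tendsto_measure_iInter_atTop (μ := P)
        (s := fun n : ℕ => {x | tp - 1/((n:ℝ)+1) < g x})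
        (fun n => (hg measurableSet_Ioi).nullMeasurableSet) hanti
        ⟨0, measure_ne_top _ _⟩
      rwa [hinter] at h
    refine ge_of_tendsto htend (Eventually.of_forall fun n => ?_)
    have hnot : tp - 1/((n:ℝ)+1) ∉ A := by
      intro hmem
      have := csInf_le hAbdd hmem
      have hpos : (0:ℝ) < 1/((n:ℝ)+1) := by positivity
      rw [← htp] at this
      linarith
    exact le_of_not_ge hnot
private lemma cc_real_ineq (p v : ℝ) (S : ℕ) (hp : p ∈ Set.Ioo (0:ℝ) 1)
    (hv : v ∈ Set.Ioo (0:ℝ) 1) (hS : 1 / (p * v) - 1 ≤ (S : ℝ)) :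
    (1 - p) ^ S ≤ v := by
  obtain ⟨hp0, hp1⟩ := hp
  obtain ⟨hv0, hv1⟩ := hv
  have hpv : 0 < p * v := mul_pos hp0 hv0
  have h1 : 1 - p * v ≤ (S : ℝ) * (p * v) := by
    have := mul_le_mul_of_nonneg_right hS hpv.le
    rw [sub_mul, one_div, inv_mul_cancel₀ hpv.ne', one_mul] at this
    linarith
  have h2 : 1 ≤ v * (1 + (S : ℝ) * p) := by nlinarith
  have h3 : 1 + (S : ℝ) * p ≤ (1 + p) ^ S := one_add_mul_le_pow (by linarith) S
  have h4 : (1 - p) ^ S * (1 + p) ^ S ≤ 1 := by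
    rw [← mul_pow]
    have h : (1 - p) * (1 + p) ≤ 1 := by nlinarith
    exact pow_le_one₀ (by nlinarith) h
  have h5 : (0:ℝ) ≤ (1 - p) ^ S := pow_nonneg (by linarith) S
  have h6 : (0:ℝ) < 1 + (S : ℝ) * p := by positivity
  nlinarith [mul_le_mul_of_nonneg_left h3 h5]


/-- Scalar Calafiore–Campi sample complexity bound: if `S ≥ 1/(pv) − 1`, then with
probability at least `1 − v` over `S` i.i.d. samples `ξ̂₁, …, ξ̂_S ~ P`, the level
`t* = maxₛ g(ξ̂ₛ)` satisfies `P(g(ξ) > t*) ≤ p`. -/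
theorem calafiore_campi_scalar
    {Ξ : Type*} [MeasurableSpace Ξ] (P : Measure Ξ) [IsProbabilityMeasure P]
    (g : Ξ → ℝ) (hg : Measurable g)
    (p v : ℝ) (hp : p ∈ Set.Ioo (0:ℝ) 1) (hv : v ∈ Set.Ioo (0:ℝ) 1)
    (S : ℕ) (hS : 1 / (p * v) - 1 ≤ (S : ℝ)) :
    1 - v ≤
      ((Measure.pi fun _ : Fin S => P)
        {ω : Fin S → Ξ | (P {x | (⨆ s : Fin S, g (ω s)) < g x}).toReal ≤ p}).toReal := by
  obtain ⟨tp, htp1, htp2⟩ := cc_quantile P g hg p hp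
  set μ : Measure (Fin S → Ξ) := Measure.pi fun _ : Fin S => P with hμ
  set E : Set (Fin S → Ξ) :=
    {ω : Fin S → Ξ | (P {x | (⨆ s : Fin S, g (ω s)) < g x}).toReal ≤ p} with hE
  -- good ω's are in E
  have hsub : {ω : Fin S → Ξ | ∃ s, tp ≤ g (ω s)} ⊆ E := by
    rintro ω ⟨s, hs⟩
    have hb : BddAbove (Set.range fun s : Fin S => g (ω s)) :=
      (Set.finite_range _).bddAbove
    have hle : tp ≤ ⨆ s : Fin S, g (ω s) := le_trans hs (le_ciSup hb s)
    have hmono : P {x | (⨆ s : Fin S, g (ω s)) < g x} ≤ P {x | tp < g x} :=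
      measure_mono fun x hx => lt_of_le_of_lt hle hx
    exact ENNReal.toReal_le_of_le_ofReal hp.1.le (le_trans hmono htp1)
  -- the bad set and its measure
  have hBmeas : MeasurableSet {x : Ξ | g x < tp} := hg measurableSet_Iio
  have hbadset : {ω : Fin S → Ξ | ∀ s, g (ω s) < tp}
      = Set.univ.pi (fun _ : Fin S => {x | g x < tp}) := by
    ext ω; simp [Set.mem_pi]
  have hbadmeas : MeasurableSet {ω : Fin S → Ξ | ∀ s, g (ω s) < tp} := by
    rw [hbadset]; exact MeasurableSet.univ_pi fun _ => hBmeas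
  have hofsub : ENNReal.ofReal (1 - p) = 1 - ENNReal.ofReal p := by
    rw [ENNReal.ofReal_sub _ hp.1.le, ENNReal.ofReal_one]
  have hPB : P {x | g x < tp} ≤ ENNReal.ofReal (1 - p) := by
    have hcompl : {x : Ξ | g x < tp} = {x | tp ≤ g x}ᶜ := by
      ext x; simp [not_le]
    rw [hcompl, measure_compl (show MeasurableSet {x : Ξ | tp ≤ g x} from hg measurableSet_Ici) (measure_ne_top _ _),
      measure_univ, hofsub]
    exact tsub_le_tsub_left htp2 1
  have hbad : μ {ω : Fin S → Ξ | ∀ s, g (ω s) < tp} ≤ ENNReal.ofReal ((1 - p) ^ S) := by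
    rw [hbadset, hμ, Measure.pi_pi]
    calc (∏ _s : Fin S, P {x | g x < tp})
        ≤ ∏ _s : Fin S, ENNReal.ofReal (1 - p) :=
          Finset.prod_le_prod' fun _ _ => hPB
      _ = ENNReal.ofReal ((1 - p) ^ S) := by
          rw [Finset.prod_const, Finset.card_univ, Fintype.card_fin,
            ENNReal.ofReal_pow (by linarith [hp.2])]
  have hgood : ENNReal.ofReal (1 - v) ≤ μ {ω : Fin S → Ξ | ∃ s, tp ≤ g (ω s)} := by
    have hceq : {ω : Fin S → Ξ | ∃ s, tp ≤ g (ω s)}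
        = {ω : Fin S → Ξ | ∀ s, g (ω s) < tp}ᶜ := by
      ext ω; simp [not_forall, not_lt]
    rw [hceq, measure_compl hbadmeas (measure_ne_top _ _), measure_univ]
    have hvle : ENNReal.ofReal ((1 - p) ^ S) ≤ ENNReal.ofReal v :=
      ENNReal.ofReal_le_ofReal (cc_real_ineq p v S hp hv hS)
    calc ENNReal.ofReal (1 - v) = 1 - ENNReal.ofReal v := by
          rw [ENNReal.ofReal_sub _ hv.1.le, ENNReal.ofReal_one]
      _ ≤ 1 - μ {ω : Fin S → Ξ | ∀ s, g (ω s) < tp} :=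
          tsub_le_tsub_left (le_trans hbad hvle) 1
  have hfinal : ENNReal.ofReal (1 - v) ≤ μ E := le_trans hgood (measure_mono hsub)
  exact (ENNReal.ofReal_le_iff_le_toReal (measure_ne_top μ E)).mp hfinal
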